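/- Let a > 0, α > 0, c > 0, x > 0 and 0 < r₀ < R be real numbers, and set δ₂ = 2/α. Then ∫_{r₀}^{R} Γᵤ(a, c x r^α) · r dr = (1/2) · [ R² Γᵤ(a, c x R^α) − (cx)^{−δ₂} Γᵤ(a+δ₂, c x R^α) − r₀² Γᵤ(a, c x r₀^α) + (cx)^{−δ₂} Γᵤ(a+δ₂, c x r₀^α) ]. (This is the closed form (E.5) of the complementary distribution function λ(x) = 1 − F(x) of the SNR in the proof of Theorem 3, up to the constant φ.) -/

import Mathlib

open MeasureTheory

/-- Upper incomplete gamma function `Γᵤ(a, x) = ∫ₓ^∞ t^(a-1) e^(-t) dt`. -/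
noncomputable def upperGamma (a x : ℝ) : ℝ := ∫ t in Set.Ioi x, t ^ (a - 1) * Real.exp (-t)

open Set Real in
lemma g_integrable {a : ℝ} (ha : 0 < a) {y : ℝ} (hy : 0 < y) :
    IntegrableOn (fun t : ℝ => t ^ (a - 1) * Real.exp (-t)) (Set.Ioi y) := by
  have := Real.GammaIntegral_convergent ha
  have h := this.mono_set (Set.Ioi_subset_Ioi hy.le)
  exact h.congr_fun (fun t ht => mul_comm _ _) measurableSet_Ioi

lemma g_cont {a : ℝ} {y : ℝ} (hy : 0 < y) :
    ContinuousAt (fun t : ℝ => t ^ (a - 1) * Real.exp (-t)) y :=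
  ((Real.continuousAt_rpow_const y (a-1) (Or.inl hy.ne')).mul
    ((Real.continuous_exp.comp continuous_neg).continuousAt))

lemma hasDerivAt_upperGamma {a : ℝ} (ha : 0 < a) {y : ℝ} (hy : 0 < y) :
    HasDerivAt (upperGamma a) (-(y ^ (a - 1) * Real.exp (-y))) y := by
  set g : ℝ → ℝ := fun t => t ^ (a - 1) * Real.exp (-t) with hg
  set y₀ := y / 2 with hy₀
  have hy₀pos : 0 < y₀ := by positivity
  have hy₀lt : y₀ < y := by linarith
  have key : ∀ z ∈ Set.Ioi y₀, upperGamma a z = upperGamma a y₀ - ∫ t in y₀..z, g t := by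
    intro z hz
    have hz' : y₀ ≤ z := le_of_lt hz
    have hzpos : 0 < z := lt_trans hy₀pos hz
    have hsplit : (∫ t in Set.Ioi y₀, g t) = (∫ t in Set.Ioc y₀ z, g t) + ∫ t in Set.Ioi z, g t := by
      rw [← setIntegral_union (Set.Ioc_disjoint_Ioi le_rfl) measurableSet_Ioi
        ((g_integrable ha hy₀pos).mono_set Set.Ioc_subset_Ioi_self) (g_integrable ha hzpos),
        Set.Ioc_union_Ioi_eq_Ioi hz']
    rw [intervalIntegral.integral_of_le hz']
    unfold upperGamma
    rw [hsplit]; ring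
  have hderiv : HasDerivAt (fun z => upperGamma a y₀ - ∫ t in y₀..z, g t)
      (-(g y)) y := by
    have h1 : HasDerivAt (fun z => ∫ t in y₀..z, g t) (g y) y := by
      refine intervalIntegral.integral_hasDerivAt_right ?_ ?_ (g_cont hy)
      · rw [intervalIntegrable_iff_integrableOn_Ioc_of_le hy₀lt.le]
        exact (g_integrable ha hy₀pos).mono_set Set.Ioc_subset_Ioi_self
      · refine ⟨Set.Ioi y₀, Ioi_mem_nhds hy₀lt, ?_⟩
        exact ((continuousOn_of_forall_continuousAt fun t ht => g_cont (hy₀pos.trans ht)).aestronglyMeasurable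
          measurableSet_Ioi)
    exact h1.const_sub _
  refine hderiv.congr_of_eventuallyEq ?_
  filter_upwards [Ioi_mem_nhds hy₀lt] with z hz using key z hz

lemma upperGamma_key {a α c x : ℝ} (hα : 0 < α) (hc : 0 < c) (hx : 0 < x) {t : ℝ} (ht : 0 < t) :
    (c * x) ^ (-(2 / α)) * (c * x * t ^ α) ^ (a + 2 / α - 1)
      = t ^ 2 * (c * x * t ^ α) ^ (a - 1) := by
  have hcx : 0 < c * x := by positivity
  have htα : 0 < t ^ α := Real.rpow_pos_of_pos ht α
  have hu : 0 < c * x * t ^ α := by positivity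
  have h1 : (c * x * t ^ α) ^ (a + 2 / α - 1)
      = (c * x * t ^ α) ^ (a - 1) * (c * x * t ^ α) ^ (2 / α) := by
    rw [← Real.rpow_add hu]; ring_nf
  have h2 : (c * x * t ^ α) ^ (2 / α) = (c * x) ^ (2 / α) * t ^ (2 : ℝ) := by
    rw [Real.mul_rpow hcx.le htα.le, ← Real.rpow_mul ht.le]
    congr 2
    field_simp
  have h3 : (c * x) ^ (-(2 / α)) * (c * x) ^ (2 / α) = 1 := by
    rw [← Real.rpow_add hcx]; simp
  calc (c * x) ^ (-(2 / α)) * (c * x * t ^ α) ^ (a + 2 / α - 1)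
      = ((c * x) ^ (-(2 / α)) * (c * x) ^ (2 / α)) * (t ^ (2 : ℝ) * (c * x * t ^ α) ^ (a - 1)) := by
        rw [h1, h2]; ring
    _ = t ^ (2 : ℝ) * (c * x * t ^ α) ^ (a - 1) := by rw [h3]; ring
    _ = t ^ 2 * (c * x * t ^ α) ^ (a - 1) := by
        rw [show (2:ℝ) = ((2:ℕ):ℝ) by norm_num, Real.rpow_natCast]


theorem stmt_10 (a α c x r₀ R : ℝ) (ha : 0 < a) (hα : 0 < α) (hc : 0 < c) (hx : 0 < x)
    (hr₀ : 0 < r₀) (hR : r₀ < R) :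
    (∫ r in r₀..R, upperGamma a (c * x * r ^ α) * r) =
      (1 / 2) * (R ^ 2 * upperGamma a (c * x * R ^ α)
        - (c * x) ^ (-(2 / α)) * upperGamma (a + 2 / α) (c * x * R ^ α)
        - r₀ ^ 2 * upperGamma a (c * x * r₀ ^ α)
        + (c * x) ^ (-(2 / α)) * upperGamma (a + 2 / α) (c * x * r₀ ^ α)) := by
  have ha2 : 0 < a + 2 / α := by positivity
  set F : ℝ → ℝ := fun r => (1 / 2) * (r ^ 2 * upperGamma a (c * x * r ^ α)
    - (c * x) ^ (-(2 / α)) * upperGamma (a + 2 / α) (c * x * r ^ α)) with hF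
  have hderiv : ∀ t ∈ Set.uIcc r₀ R,
      HasDerivAt F (upperGamma a (c * x * t ^ α) * t) t := by
    intro t ht
    rw [Set.uIcc_of_le hR.le] at ht
    have htpos : 0 < t := lt_of_lt_of_le hr₀ ht.1
    have hupos : 0 < c * x * t ^ α := by positivity
    have hu : HasDerivAt (fun r : ℝ => c * x * r ^ α) (c * x * (α * t ^ (α - 1))) t :=
      (Real.hasDerivAt_rpow_const (Or.inl htpos.ne')).const_mul (c * x)
    have hG1 : HasDerivAt (fun r : ℝ => upperGamma a (c * x * r ^ α))
        (-((c * x * t ^ α) ^ (a - 1) * Real.exp (-(c * x * t ^ α))) * (c * x * (α * t ^ (α - 1)))) t :=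
      (hasDerivAt_upperGamma ha hupos).comp (h := fun r : ℝ => c * x * r ^ α) t hu
    have hG2 : HasDerivAt (fun r : ℝ => upperGamma (a + 2 / α) (c * x * r ^ α))
        (-((c * x * t ^ α) ^ (a + 2 / α - 1) * Real.exp (-(c * x * t ^ α))) * (c * x * (α * t ^ (α - 1)))) t :=
      (hasDerivAt_upperGamma ha2 hupos).comp (h := fun r : ℝ => c * x * r ^ α) t hu
    have h1 := ((hasDerivAt_pow 2 t).mul hG1)
    have h2 := hG2.const_mul ((c * x) ^ (-(2 / α)))
    have hD := (h1.sub h2).const_mul (1 / 2 : ℝ)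
    refine HasDerivAt.congr_deriv (f := F) hD ?_
    symm
    have key := upperGamma_key (a := a) hα hc hx htpos
    norm_num
    linear_combination (-(Real.exp (-(c * x * t ^ α)) * (c * x * (α * t ^ (α - 1)))) / 2) * key
  have hcont : ContinuousOn (fun t => upperGamma a (c * x * t ^ α) * t) (Set.uIcc r₀ R) := by
    intro t ht
    rw [Set.uIcc_of_le hR.le] at ht
    have htpos : 0 < t := lt_of_lt_of_le hr₀ ht.1
    have hupos : 0 < c * x * t ^ α := by positivity
    have hu' : HasDerivAt (fun r : ℝ => c * x * r ^ α) (c * x * (α * t ^ (α - 1))) t :=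
      (Real.hasDerivAt_rpow_const (Or.inl htpos.ne')).const_mul (c * x)
    exact (((hasDerivAt_upperGamma ha hupos).comp (h := fun r : ℝ => c * x * r ^ α) t hu').mul
      (hasDerivAt_id t)).differentiableAt.continuousAt.continuousWithinAt
  rw [intervalIntegral.integral_eq_sub_of_hasDerivAt hderiv hcont.intervalIntegrable]
  simp only [hF]; ring
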